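/- Let n ≥ 3 be an odd integer and let L : ZMod n → Finset ℕ be an assignment of color lists to the vertices of the cycle C_n such that |L(v)| ≥ 2 for every v. Then there exists a function c : ZMod n → ℕ with c(v) ∈ L(v) for every v and c(v) ≠ c(v+1) for every v, if and only if it is not the case that all the lists L(v) are equal to one common 2-element set (i.e., unless there exists A : Finset ℕ with |A| = 2 and L(v) = A for every v). -/

import Mathlib

theorem cycle_greedy (n : ℕ) (hn : 3 ≤ n) (L : ZMod n → Finset ℕ)
    (hL : ∀ v, 2 ≤ (L v).card) (w : ZMod n) (x : ℕ) (hx : x ∈ L w)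
    (key : ∀ y : ℕ, (L (w - 1) \ {y, x}).Nonempty) :
    ∃ c : ZMod n → ℕ, (∀ v, c v ∈ L v) ∧ ∀ v, c v ≠ c (v + 1) := by
  haveI : NeZero n := ⟨by omega⟩
  set T : ℕ → ℕ → Finset ℕ := fun k p =>
    if k = n - 1 then L (w + (k : ZMod n)) \ {p, x} else L (w + (k : ZMod n)) \ {p} with hT
  have hwn : w + ((n - 1 : ℕ) : ZMod n) = w - 1 := by
    have : ((n - 1 : ℕ) : ZMod n) = (n : ZMod n) - 1 := by
      push_cast [Nat.cast_sub (by omega : 1 ≤ n)]; ring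
    rw [this, ZMod.natCast_self]; ring
  have hne : ∀ k p, (T (k + 1) p).Nonempty := by
    intro k p
    by_cases hk : k + 1 = n - 1
    · rw [hT]; simp only [if_pos hk]; rw [hk, hwn]; exact key p
    · rw [hT]; simp only [if_neg hk]
      have h1 := Finset.le_card_sdiff ({p} : Finset ℕ) (L (w + ((k+1 : ℕ) : ZMod n)))
      have := hL (w + ((k+1 : ℕ) : ZMod n))
      rw [← Finset.card_pos]
      simp only [Finset.card_singleton] at h1
      omega
  set d : ℕ → ℕ := fun k => Nat.rec x (fun m p => (hne m p).choose) k with hd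
  have d0 : d 0 = x := rfl
  have dstep : ∀ k : ℕ, d (k + 1) ∈ T (k + 1) (d k) := fun k => (hne k (d k)).choose_spec
  have dstep' : ∀ k : ℕ, d (k + 1) ∈ L (w + ((k + 1 : ℕ) : ZMod n)) ∧ d (k + 1) ≠ d k ∧
      (k + 1 = n - 1 → d (k + 1) ≠ x) := by
    intro k
    have h := dstep k
    rw [hT] at h
    simp only at h
    by_cases hk : k + 1 = n - 1
    · rw [if_pos hk] at h
      simp only [Finset.mem_sdiff, Finset.mem_insert, Finset.mem_singleton, not_or] at h
      exact ⟨h.1, h.2.1, fun _ => h.2.2⟩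
    · rw [if_neg hk] at h
      simp only [Finset.mem_sdiff, Finset.mem_singleton] at h
      exact ⟨h.1, h.2, fun h' => absurd h' hk⟩
  have dmem : ∀ k : ℕ, d k ∈ L (w + (k : ZMod n)) := by
    intro k
    cases k with
    | zero => simpa [d0] using hx
    | succ m => exact (dstep' m).1
  have dne : ∀ k : ℕ, d (k + 1) ≠ d k := fun k => (dstep' k).2.1
  have dlast : d (n - 1) ≠ x := by
    obtain ⟨m, hm⟩ : ∃ m, n - 1 = m + 1 := ⟨n - 2, by omega⟩
    rw [hm]
    exact (dstep' m).2.2 hm.symm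
  refine ⟨fun v => d (v - w).val, fun v => ?_, fun v => ?_⟩
  · have := dmem (v - w).val
    rwa [ZMod.natCast_val, ZMod.cast_id, add_sub_cancel] at this
  · show d (v - w).val ≠ d (v + 1 - w).val
    have hcv1 : v + 1 - w = (((v - w).val + 1 : ℕ) : ZMod n) := by
      push_cast
      rw [ZMod.natCast_val, ZMod.cast_id]; ring
    have hval : (v + 1 - w).val = ((v - w).val + 1) % n := by
      rw [hcv1, ZMod.val_natCast]
    have hlt : (v - w).val < n := ZMod.val_lt _
    by_cases hk : (v - w).val = n - 1
    · rw [hval, hk]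
      have : (n - 1 + 1) % n = 0 := by
        rw [Nat.sub_add_cancel (by omega)]; simp
      rw [this, d0]
      exact dlast
    · rw [hval, Nat.mod_eq_of_lt (by omega)]
      exact (dne _).symm

/-- An odd cycle `C_n` (vertices `ZMod n`, `n ≥ 3` odd) with lists of size at
least two admits a proper coloring from the lists if and only if the lists are
not all equal to a single common 2-element set. -/
theorem odd_cycle_list_coloring (n : ℕ) (hn : 3 ≤ n) (hodd : Odd n)
    (L : ZMod n → Finset ℕ) (hL : ∀ v, 2 ≤ (L v).card) :
    (∃ c : ZMod n → ℕ, (∀ v, c v ∈ L v) ∧ ∀ v, c v ≠ c (v + 1)) ↔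
      ¬ ∃ A : Finset ℕ, A.card = 2 ∧ ∀ v, L v = A := by
  haveI : NeZero n := ⟨by omega⟩
  constructor
  · rintro ⟨c, hc, hcne⟩ ⟨A, hA2, hAll⟩
    obtain ⟨a, b, hab, rfl⟩ := Finset.card_eq_two.mp hA2
    have hmem : ∀ v, c v = a ∨ c v = b := by
      intro v
      have := hc v
      rw [hAll v] at this
      simpa using this
    have step : ∀ v, c (v + 2) = c v := by
      intro v
      have h1 := hcne v
      have h2 := hcne (v + 1)
      have e1 := hmem v
      have e2 := hmem (v + 1)
      have e3 := hmem (v + 1 + 1)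
      rw [show v + 2 = v + 1 + 1 by ring]
      rcases e1 with h | h <;> rcases e2 with h' | h' <;> rcases e3 with h'' | h'' <;>
        simp_all
    have even : ∀ k : ℕ, c ((2 * k : ℕ) : ZMod n) = c 0 := by
      intro k
      induction k with
      | zero => simp
      | succ m ih =>
        have : ((2 * (m + 1) : ℕ) : ZMod n) = ((2 * m : ℕ) : ZMod n) + 2 := by push_cast; ring
        rw [this, step _, ih]
    obtain ⟨m, hm⟩ := hodd
    have h0 : ((2 * m : ℕ) : ZMod n) + 1 = 0 := by
      have : ((2 * m + 1 : ℕ) : ZMod n) = 0 := by rw [← hm]; exact ZMod.natCast_self n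
      push_cast at this ⊢
      linear_combination this
    have := hcne ((2 * m : ℕ) : ZMod n)
    rw [h0, even m] at this
    exact this rfl
  · intro hA
    by_cases hbig : ∃ v, 3 ≤ (L v).card
    · obtain ⟨v, hv⟩ := hbig
      obtain ⟨x, hx⟩ : (L (v + 1)).Nonempty := Finset.card_pos.mp (by have := hL (v+1); omega)
      refine cycle_greedy n hn L hL (v + 1) x hx ?_
      intro y
      rw [← Finset.card_pos]
      have h1 : (L (v + 1 - 1)).card ≤ (L (v + 1 - 1) \ {y, x}).card + ({y, x} : Finset ℕ).card :=
        Finset.card_le_card_sdiff_add_card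
      have h2 : ({y, x} : Finset ℕ).card ≤ 2 := Finset.card_insert_le _ _ |>.trans (by simp)
      have h3 : v + 1 - 1 = v := by ring
      rw [h3] at h1 ⊢
      omega
    · push_neg at hbig
      have hcard : ∀ v, (L v).card = 2 := fun v => le_antisymm (by have := hbig v; omega) (hL v)
      have hdiff : ∃ u, L u ≠ L (u + 1) := by
        by_contra h
        push_neg at h
        have hallk : ∀ k : ℕ, L (k : ZMod n) = L 0 := by
          intro k
          induction k with
          | zero => simp
          | succ m ih =>
            rw [show ((m + 1 : ℕ) : ZMod n) = ((m : ℕ) : ZMod n) + 1 by push_cast; ring,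
              ← h ((m : ℕ) : ZMod n), ih]
        exact hA ⟨L 0, hcard 0, fun v => by
          have := hallk v.val
          rwa [ZMod.natCast_val, ZMod.cast_id] at this⟩
      obtain ⟨u, hu⟩ := hdiff
      have hns : ¬ L (u + 1) ⊆ L u := by
        intro hsub
        exact hu (Finset.eq_of_subset_of_card_le hsub (by rw [hcard, hcard]) ).symm
      obtain ⟨x, hx, hxn⟩ := Finset.not_subset.mp hns
      refine cycle_greedy n hn L hL (u + 1) x hx ?_
      intro y
      have h3 : u + 1 - 1 = u := by ring
      rw [h3]
      obtain ⟨a, ha, b, hb, hab⟩ :=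
        Finset.one_lt_card.mp (lt_of_lt_of_le one_lt_two (hL u))
      by_cases hay : a = y
      · refine ⟨b, Finset.mem_sdiff.mpr ⟨hb, ?_⟩⟩
        simp only [Finset.mem_insert, Finset.mem_singleton, not_or]
        exact ⟨by rw [← hay]; exact (Ne.symm hab), fun h => hxn (h ▸ hb)⟩
      · refine ⟨a, Finset.mem_sdiff.mpr ⟨ha, ?_⟩⟩
        simp only [Finset.mem_insert, Finset.mem_singleton, not_or]
        exact ⟨hay, fun h => hxn (h ▸ ha)⟩
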